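/- Let F be a descending star network of order n, and let ρ_{ℓ_1}, ρ_{ℓ_2} be directed paths in F from sources ℓ_1 < ℓ_2 to sinks m_1, m_2 respectively. Then ρ_{ℓ_1} and ρ_{ℓ_2} share a vertex if and only if there exists a directed path in F from source ℓ_1 to sink m_2. -/

import Mathlib

namespace ZigZag

noncomputable section

attribute [local instance] Classical.propDecidable

/-- Vertices of a network of order `n` built from `t` stars:
sources, sinks and central vertices. -/
inductive V (n t : ℕ) : Type
  | src : Fin n → V n t
  | snk : Fin n → V n t
  | ctr : Fin t → V n t
  deriving DecidableEq

/-- Data of a concatenation `G_{[c 0, d 0]} ∘ ⋯ ∘ G_{[c (t-1), d (t-1)]}` of star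
networks of order `n`: pairwise distinct, pairwise non-nesting intervals
satisfying the triple-overlap condition. -/
structure IntervalData (n t : ℕ) : Type where
  c : Fin t → Fin n
  d : Fin t → Fin n
  cd_le : ∀ k, c k ≤ d k
  nonnest : ∀ k l : Fin t, k ≠ l → ¬ (c k ≤ c l ∧ d l ≤ d k)
  tripleOverlap : ∀ k l m : Fin t, k < l → l < m →
    (c k ≤ d l ∧ c l ≤ d k) → (c l ≤ d m ∧ c m ≤ d l) →
    (c k < c l ∧ c l < c m) ∨ (c m < c l ∧ c l < c k)

variable {n t : ℕ}

/-- `i` belongs to the `k`-th interval `[c k, d k]`. -/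
def IntervalData.mem (D : IntervalData n t) (k : Fin t) (i : Fin n) : Prop :=
  D.c k ≤ i ∧ i ≤ D.d k

/-- Edges of the zig-zag network associated to `D` (collapsing the parallel
central edges, i.e. keeping one path per covering pair). -/
inductive Edge (D : IntervalData n t) : V n t → V n t → Prop
  | srcCtr (i : Fin n) (k : Fin t) : D.mem k i → (∀ l, l < k → ¬ D.mem l i) →
      Edge D (V.src i) (V.ctr k)
  | ctrSnk (i : Fin n) (k : Fin t) : D.mem k i → (∀ l, k < l → ¬ D.mem l i) →
      Edge D (V.ctr k) (V.snk i)
  | srcSnk (i : Fin n) : (∀ k, ¬ D.mem k i) → Edge D (V.src i) (V.snk i)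
  | ctrCtr (i : Fin n) (k l : Fin t) : k < l → D.mem k i → D.mem l i →
      (∀ m, k < m → m < l → ¬ D.mem m i) → Edge D (V.ctr k) (V.ctr l)

/-- A directed path (a nonempty list of successively adjacent vertices)
from `x` to `y` in the digraph with edge relation `E`. -/
def PathIn (E : V n t → V n t → Prop) (p : List (V n t)) (x y : V n t) : Prop :=
  p ≠ [] ∧ p.Chain' E ∧ p.head? = some x ∧ p.getLast? = some y

/-- A directed path from source `i` to sink `j` in the zig-zag network of `D`. -/
def IsPathFromTo (D : IntervalData n t) (p : List (V n t)) (i j : Fin n) : Prop :=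
  PathIn (Edge D) p (V.src i) (V.snk j)

/-- The intervals `[c k, d k]` and `[c l, d l]` intersect. -/
def Intersects (D : IntervalData n t) (k l : Fin t) : Prop :=
  D.c k ≤ D.d l ∧ D.c l ≤ D.d k

/-- The covering relation `⋖` on the intervals of the concatenation. -/
def Cov (D : IntervalData n t) (k l : Fin t) : Prop :=
  k < l ∧ Intersects D k l ∧
    ∀ m, k < m → m < l → ∀ i : Fin n, ¬ (D.mem k i ∧ D.mem l i ∧ D.mem m i)

/-- The strict partial order `≺` generated by the covering relation. -/
def Prec (D : IntervalData n t) : Fin t → Fin t → Prop :=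
  Relation.TransGen (Cov D)

/-- A path family of type `v`: the `i`-th path runs from source `i` to sink `v i`. -/
def IsFamilyOfType (D : IntervalData n t) (fam : Fin n → List (V n t))
    (v : Equiv.Perm (Fin n)) : Prop :=
  ∀ i, IsPathFromTo D (fam i) i (v i)

/-- The path family covers the network: every edge lies on some path. -/
def Covers (D : IntervalData n t) (fam : Fin n → List (V n t)) : Prop :=
  ∀ x y, Edge D x y → ∃ i, [x, y] <:+: fam i

/-- Bruhat order on `S_n`. -/
def BruhatLE (v w : Equiv.Perm (Fin n)) : Prop :=
  ∀ i j : Fin n,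
    (Finset.univ.filter fun k : Fin n => k ≤ i ∧ j ≤ v k).card ≤
      (Finset.univ.filter fun k : Fin n => k ≤ i ∧ j ≤ w k).card

/-- `D` is interval data for the zig-zag network `F_w`: a path family of type `v`
covers it iff `v ≤ w` in Bruhat order, and such families are unique. -/
def Represents (D : IntervalData n t) (w : Equiv.Perm (Fin n)) : Prop :=
  ∀ v : Equiv.Perm (Fin n),
    ((∃ fam, IsFamilyOfType D fam v ∧ Covers D fam) ↔ BruhatLE v w) ∧
    ∀ fam fam', IsFamilyOfType D fam v → Covers D fam →
      IsFamilyOfType D fam' v → Covers D fam' → fam = fam'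

def Avoids3412 (w : Equiv.Perm (Fin n)) : Prop :=
  ¬ ∃ i1 i2 i3 i4 : Fin n, i1 < i2 ∧ i2 < i3 ∧ i3 < i4 ∧
    w i3 < w i4 ∧ w i4 < w i1 ∧ w i1 < w i2

def Avoids4231 (w : Equiv.Perm (Fin n)) : Prop :=
  ¬ ∃ i1 i2 i3 i4 : Fin n, i1 < i2 ∧ i2 < i3 ∧ i3 < i4 ∧
    w i4 < w i2 ∧ w i2 < w i3 ∧ w i3 < w i1

def Avoids312 (w : Equiv.Perm (Fin n)) : Prop :=
  ¬ ∃ i1 i2 i3 : Fin n, i1 < i2 ∧ i2 < i3 ∧ w i2 < w i3 ∧ w i3 < w i1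

/-- The source-`i`-to-sink-`i` and source-`j`-to-sink-`j` paths share a vertex. -/
def PathsIntersect (D : IntervalData n t) (i j : Fin n) : Prop :=
  ∃ p q, IsPathFromTo D p i i ∧ IsPathFromTo D q j j ∧ ∃ x, x ∈ p ∧ x ∈ q

/-- The strict order of the poset `P(F)`. -/
def PRel (D : IntervalData n t) (i j : Fin n) : Prop :=
  i < j ∧ ¬ PathsIntersect D i j

/-- Descending star network: `c 0 > c 1 > ⋯`. -/
def Descending (D : IntervalData n t) : Prop :=
  ∀ k l : Fin t, k < l → D.c l < D.c k

/-- Incomparability for a strict order. -/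
def Incomp {α : Type*} (r : α → α → Prop) (x y : α) : Prop :=
  x ≠ y ∧ ¬ r x y ∧ ¬ r y x

/-- A strict order is a unit interval order if it is (3+1)-free and (2+2)-free. -/
def UnitIntervalOrder {α : Type*} (r : α → α → Prop) : Prop :=
  (¬ ∃ a b c x, r a b ∧ r b c ∧ Incomp r x a ∧ Incomp r x b ∧ Incomp r x c) ∧
  (¬ ∃ a b x y, r a b ∧ r x y ∧ Incomp r a x ∧ Incomp r a y ∧
      Incomp r b x ∧ Incomp r b y)

/-- `lam` is a partition of `n`. -/
def IsPartition (lam : List ℕ) (n : ℕ) : Prop :=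
  lam.Pairwise (· ≥ ·) ∧ (∀ x ∈ lam, 0 < x) ∧ lam.sum = n

/-- An `F`-tableau of shape `lam` (French notation): a covering path family
together with an arrangement of the `n` source indices into rows of
lengths `lam`. -/
structure Tableau (D : IntervalData n t) (lam : List ℕ) : Type where
  fam : Fin n → List (V n t)
  typ : Equiv.Perm (Fin n)
  isFam : IsFamilyOfType D fam typ
  covers : Covers D fam
  rows : List (List (Fin n))
  shape : rows.map List.length = lam
  nodup : rows.flatten.Nodup
  complete : ∀ i : Fin n, i ∈ rows.flatten

namespace Tableau

variable {D : IntervalData n t} {lam : List ℕ}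

/-- The paths indexed by `a` and `b` share a vertex. -/
def Intersect (U : Tableau D lam) (a b : Fin n) : Prop :=
  ∃ x, x ∈ U.fam a ∧ x ∈ U.fam b

def RowClosed (U : Tableau D lam) : Prop :=
  ∀ r ∈ U.rows, (r.map ⇑U.typ).Perm r

def LeftRowStrict (U : Tableau D lam) : Prop :=
  ∀ r ∈ U.rows, r.Chain' (· < ·)

def RowSemistrict (U : Tableau D lam) : Prop :=
  ∀ r ∈ U.rows, r.Chain' fun a b => ¬ (b < a ∧ ¬ U.Intersect a b)

def CycRowSemistrict (U : Tableau D lam) : Prop :=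
  U.RowSemistrict ∧ ∀ r ∈ U.rows, ∀ a b : Fin n,
    r.getLast? = some a → r.head? = some b → ¬ (b < a ∧ ¬ U.Intersect a b)

def RowStrict (U : Tableau D lam) : Prop :=
  ∀ r ∈ U.rows, r.Chain' fun a b => a < b ∧ ¬ U.Intersect a b

def RightAnchored (U : Tableau D lam) : Prop :=
  ∀ r ∈ U.rows, ∀ a : Fin n, r.getLast? = some a → ∀ b ∈ r, a ≤ b

def LeftAnchored (U : Tableau D lam) : Prop :=
  ∀ r ∈ U.rows, ∀ a : Fin n, r.head? = some a → ∀ b ∈ r, a ≤ b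

def Cylindrical (U : Tableau D lam) : Prop :=
  ∀ r ∈ U.rows, r.map ⇑U.typ = r.rotate 1

def TypeE (U : Tableau D lam) : Prop := U.typ = 1

/-- `inv (U_1 ∘ ⋯ ∘ U_r)`: inversions of the concatenation of the rows. -/
def invConcat (U : Tableau D lam) : ℕ :=
  Set.ncard {p : Fin U.rows.flatten.length × Fin U.rows.flatten.length |
    p.1 < p.2 ∧ U.Intersect (U.rows.flatten.get p.1) (U.rows.flatten.get p.2) ∧
      U.rows.flatten.get p.2 < U.rows.flatten.get p.1}

/-- `inv (U^R)` for a one-rowed tableau `U`. -/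
def invR (U : Tableau D lam) : ℕ :=
  Set.ncard {p : Fin U.rows.flatten.length × Fin U.rows.flatten.length |
    p.1 < p.2 ∧ U.Intersect (U.rows.flatten.get p.1) (U.rows.flatten.get p.2) ∧
      U.rows.flatten.get p.1 < U.rows.flatten.get p.2}

/-- `rinv` of a single row `r`. -/
def rinvRow (U : Tableau D lam) (r : List (Fin n)) : ℕ :=
  Set.ncard {p : Fin r.length × Fin r.length |
    p.1 < p.2 ∧ U.Intersect (r.get p.1) (r.get p.2) ∧
      U.typ (r.get p.2) < U.typ (r.get p.1)}

/-- `rinv (U_1) + ⋯ + rinv (U_r)`. -/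
def rinvRowsSum (U : Tableau D lam) : ℕ := (U.rows.map U.rinvRow).sum

/-- `inv (U^tr)`: inversions between entries of distinct rows. -/
def invTr (U : Tableau D lam) : ℕ :=
  Set.ncard {p : Fin n × Fin n |
    (∃ j1 j2 : ℕ, j1 < j2 ∧ p.1 ∈ U.rows.getD j1 [] ∧ p.2 ∈ U.rows.getD j2 []) ∧
      U.Intersect p.1 p.2 ∧ p.2 < p.1}

/-- `rinv (U^tr)`: right inversions between entries of distinct rows. -/
def rinvTr (U : Tableau D lam) : ℕ :=
  Set.ncard {p : Fin n × Fin n |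
    (∃ j1 j2 : ℕ, j1 < j2 ∧ p.1 ∈ U.rows.getD j1 [] ∧ p.2 ∈ U.rows.getD j2 []) ∧
      U.Intersect p.1 p.2 ∧ U.typ p.2 < U.typ p.1}

end Tableau

/-- Row `j` of `U` has entry set `I j`. -/
def RowContents {D : IntervalData n t} {lam : List ℕ} (U : Tableau D lam)
    (I : Fin lam.length → Finset (Fin n)) : Prop :=
  ∀ j : Fin lam.length, (U.rows.getD (j : ℕ) []).toFinset = I j

/-- `[a]_q = 1 + q + ⋯ + q^(a-1)`. -/
noncomputable def qNat (a : ℕ) : Polynomial ℤ := ∑ i ∈ Finset.range a, Polynomial.X ^ i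

/-- `[a]_q! = [a]_q [a-1]_q ⋯ [1]_q`. -/
noncomputable def qFact (a : ℕ) : Polynomial ℤ := ∏ i ∈ Finset.range a, qNat (i + 1)

/-- The network is connected as an (undirected) graph. -/
def Connected (D : IntervalData n t) : Prop :=
  ∀ x y : V n t, Relation.ReflTransGen (fun a b => Edge D a b ∨ Edge D b a) x y

noncomputable def Onum (D : IntervalData n t) : Polynomial ℤ :=
  ∏ k : Fin t, qFact ((D.d k : ℕ) - (D.c k : ℕ))

noncomputable def Oden (D : IntervalData n t) : Polynomial ℤ :=
  ∏ p : Fin t × Fin t,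
    if Cov D p.1 p.2 then
      if D.c p.1 < D.c p.2 then qFact ((D.d p.1 : ℕ) - (D.c p.2 : ℕ))
      else qFact ((D.d p.2 : ℕ) - (D.c p.1 : ℕ))
    else 1

/-- The rational function `O(F)`, an element of the fraction field of `ℤ[q]`. -/
noncomputable def OF (D : IntervalData n t) : FractionRing (Polynomial ℤ) :=
  if Connected D then
    algebraMap (Polynomial ℤ) (FractionRing (Polynomial ℤ)) (Onum D) /
      algebraMap (Polynomial ℤ) (FractionRing (Polynomial ℤ)) (Oden D)
  else 0

/-- Cycle type of a permutation, as a partition of `n` (including fixed points). -/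
noncomputable def fullCycleType (v : Equiv.Perm (Fin n)) : Multiset ℕ :=
  v.cycleType + Multiset.replicate (n - v.support.card) 1

/-- `z_λ = 1^{α_1} 2^{α_2} ⋯ α_1! α_2! ⋯`. -/
noncomputable def zPart (lam : List ℕ) : ℕ :=
  lam.prod * ∏ i ∈ lam.toFinset, (lam.count i).factorial

/-- `rinv (U(u, π))` where the one-rowed tableau `U(u,π)` lists the paths
`fam (u 0), fam (u 1), …` whose sinks are `v 0, v 1, …`. -/
def rinvU (D : IntervalData n t) (fam : Fin n → List (V n t))
    (u v : Equiv.Perm (Fin n)) : ℕ :=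
  Set.ncard {p : Fin n × Fin n | p.1 < p.2 ∧
    (∃ x, x ∈ fam (u p.1) ∧ x ∈ fam (u p.2)) ∧ v p.2 < v p.1}

/-- Edges of the restricted network `F|_S`, the union of the
source-`i`-to-sink-`i` paths for `i ∈ S`. -/
def REdge (D : IntervalData n t) (S : Finset (Fin n)) (x y : V n t) : Prop :=
  Edge D x y ∧ ∃ i ∈ S, ∃ p, IsPathFromTo D p i i ∧ [x, y] <:+: p

/-- A cylindrical one-rowed tableau of the restricted network `F|_S`. -/
structure SubRowTab (D : IntervalData n t) (S : Finset (Fin n)) : Type where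
  row : List (Fin n)
  nodup : row.Nodup
  content : row.toFinset = S
  fam : Fin n → List (V n t)
  isPath : ∀ m : Fin row.length,
    PathIn (REdge D S) (fam (row.get m)) (V.src (row.get m))
      (V.snk (row.get ⟨((m : ℕ) + 1) % row.length, Nat.mod_lt _ m.pos⟩))
  covers : ∀ x y, REdge D S x y → ∃ a ∈ row, [x, y] <:+: fam a

/-- Inversions of a one-rowed subnetwork tableau. -/
def SubRowTab.Inv {D : IntervalData n t} {S : Finset (Fin n)}
    (W : SubRowTab D S) : ℕ :=
  Set.ncard {p : Fin W.row.length × Fin W.row.length | p.1 < p.2 ∧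
    (∃ x, x ∈ W.fam (W.row.get p.1) ∧ x ∈ W.fam (W.row.get p.2)) ∧
    W.row.get p.2 < W.row.get p.1}

def SubRowTab.LeftAnchored {D : IntervalData n t} {S : Finset (Fin n)}
    (W : SubRowTab D S) : Prop :=
  ∀ a : Fin n, W.row.head? = some a → ∀ b ∈ W.row, a ≤ b

/-- The concatenation `V(F,I)_1 ∘ ⋯ ∘ V(F,I)_r` of the rows of the tableau
`V(F,I)`, as a list of source indices: each block `I j` in increasing order. -/
def Vlist {r : ℕ} (I : Fin r → Finset (Fin n)) : List (Fin n) :=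
  (List.finRange r).flatMap fun j => (I j).sort (· ≤ ·)

/-- Inversions of a list of indices, filled with the type-`e` path family. -/
def invListE (D : IntervalData n t) (l : List (Fin n)) : ℕ :=
  Set.ncard {p : Fin l.length × Fin l.length | p.1 < p.2 ∧
    PathsIntersect D (l.get p.1) (l.get p.2) ∧ l.get p.2 < l.get p.1}

section Aux

variable {n t : ℕ} {D : IntervalData n t}

lemma d_lt_of_desc (hdesc : Descending D) {k l : Fin t} (h : k < l) :
    D.d l < D.d k := by
  have hc := hdesc k l h
  have hnn := D.nonnest l k (ne_of_gt h)
  by_contra hle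
  push_neg at hle
  exact hnn ⟨le_of_lt hc, hle⟩

lemma mem_contig (hdesc : Descending D) {k m l : Fin t} {i : Fin n}
    (h1 : k ≤ m) (h2 : m ≤ l) (hk : D.mem k i) (hl : D.mem l i) : D.mem m i := by
  constructor
  · rcases eq_or_lt_of_le h1 with he | hlt
    · exact he ▸ hk.1
    · exact le_trans (le_of_lt (hdesc k m hlt)) hk.1
  · rcases eq_or_lt_of_le h2 with he | hlt
    · exact he ▸ hl.2
    · exact le_trans hl.2 (le_of_lt (d_lt_of_desc hdesc hlt))

lemma snk_no_out {i : Fin n} {y : V n t} : ¬ Edge D (V.snk i) y := by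
  intro h; cases h

lemma path_cons {E : V n t → V n t → Prop} {q : List (V n t)} {x' y x : V n t}
    (h : PathIn E q x' y) (he : E x x') : PathIn E (x :: q) x y := by
  obtain ⟨hne, hch, hhd, hlast⟩ := h
  cases q with
  | nil => exact absurd rfl hne
  | cons c q'' =>
    have hc : c = x' := by simpa using hhd
    subst hc
    exact ⟨List.cons_ne_nil _ _, List.isChain_cons_cons.mpr ⟨he, hch⟩, rfl,
      by rw [List.getLast?_cons_cons]; exact hlast⟩

lemma ctr_path_struct (hdesc : Descending D) :
    ∀ (p : List (V n t)) (A : Fin t) (m : Fin n),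
      PathIn (Edge D) p (V.ctr A) (V.snk m) →
      ∃ B : Fin t, A ≤ B ∧ D.mem B m ∧ (∀ k, B < k → ¬ D.mem k m) ∧
        (∀ j : Fin t, A ≤ j → j ≤ B → V.ctr j ∈ p) ∧
        (∀ x ∈ p, x = V.snk m ∨ ∃ j : Fin t, A ≤ j ∧ j ≤ B ∧ x = V.ctr j) ∧
        (∀ j k : Fin t, A ≤ j → k ≤ B → (k : ℕ) = (j : ℕ) + 1 →
          ∃ i, D.mem j i ∧ D.mem k i) := by
  intro p
  induction p with
  | nil => intro A m h; exact absurd rfl h.1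
  | cons a q ih =>
    intro A m h
    obtain ⟨-, hch, hhd, hlast⟩ := h
    have ha : a = V.ctr A := by simpa using hhd
    cases q with
    | nil =>
      rw [ha] at hlast
      simp at hlast
    | cons b q' =>
      replace hch := List.isChain_cons_cons.mp hch
      obtain ⟨hedge, hch'⟩ := hch
      rw [List.getLast?_cons_cons] at hlast
      cases hedge with
      | srcCtr i k h1 h2 => exact absurd ha (by simp)
      | srcSnk i h1 => exact absurd ha (by simp)
      | ctrSnk i k h1 h2 =>
        have hkA : k = A := by simpa using ha
        rw [hkA] at h1 h2 ⊢
        cases q' with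
        | cons c q'' => exact absurd (List.isChain_cons_cons.mp hch').1 snk_no_out
        | nil =>
          have him : i = m := by simpa using hlast
          rw [him] at h1 h2 ⊢
          refine ⟨A, le_refl _, h1, h2, ?_, ?_, ?_⟩
          · intro j hj1 hj2
            have hjA : j = A := le_antisymm hj2 hj1
            rw [hjA]; simp
          · intro x hx
            rcases List.mem_cons.mp hx with h' | h'
            · exact Or.inr ⟨A, le_refl _, le_refl _, h'⟩
            · exact Or.inl (by simpa using h')
          · intro j k' hj hk' hsucc
            exfalso; omega
      | ctrCtr i k l hkl hki hli hno =>
        have hkA : k = A := by simpa using ha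
        rw [hkA] at hkl hki hno ⊢
        have hsuc : (l : ℕ) = (A : ℕ) + 1 := by
          by_contra hne'
          have h1 : (A : ℕ) + 1 < (l : ℕ) := by omega
          have hAl : (A : ℕ) + 1 < t := lt_trans h1 l.isLt
          have hm : D.mem ⟨(A : ℕ) + 1, hAl⟩ i :=
            mem_contig hdesc (by simp only [Fin.le_def, Fin.lt_def, Fin.val_mk]; omega) (by simp only [Fin.le_def, Fin.lt_def, Fin.val_mk]; omega) hki hli
          exact hno _ (by simp only [Fin.le_def, Fin.lt_def, Fin.val_mk]; omega) (by simp only [Fin.le_def, Fin.lt_def, Fin.val_mk]; omega) hm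
        obtain ⟨B, hlB, hBm, hBmax, hcont, hsub, hint⟩ :=
          ih l m ⟨List.cons_ne_nil _ _, hch', rfl, hlast⟩
        have hAB : A ≤ B := le_trans (le_of_lt hkl) hlB
        refine ⟨B, hAB, hBm, hBmax, ?_, ?_, ?_⟩
        · intro j hj1 hj2
          rcases eq_or_lt_of_le hj1 with he | hlt
          · rw [← he]; simp
          · have hlj : l ≤ j := by omega
            exact List.mem_cons_of_mem _ (hcont j hlj hj2)
        · intro x hx
          rcases List.mem_cons.mp hx with h' | h'
          · exact Or.inr ⟨A, le_refl _, hAB, h'⟩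
          · rcases hsub x h' with h'' | ⟨j, hj1, hj2, hj3⟩
            · exact Or.inl h''
            · exact Or.inr ⟨j, le_trans (le_of_lt hkl) hj1, hj2, hj3⟩
        · intro j k' hj hk' hsucc
          rcases eq_or_lt_of_le hj with he | hlt
          · have hkl' : k' = l := by omega
            exact ⟨i, by rw [← he]; exact hki, by rw [hkl']; exact hli⟩
          · have hlj : l ≤ j := by omega
            exact hint j k' hlj hk' hsucc

lemma path_struct (hdesc : Descending D) {p : List (V n t)} {l m : Fin n}
    (h : PathIn (Edge D) p (V.src l) (V.snk m)) :
    (l = m ∧ (∀ k, ¬ D.mem k l) ∧ ∀ x ∈ p, x = V.src l ∨ x = V.snk m) ∨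
    ∃ A B : Fin t, A ≤ B ∧ D.mem A l ∧ (∀ k, k < A → ¬ D.mem k l) ∧
      D.mem B m ∧ (∀ k, B < k → ¬ D.mem k m) ∧
      (∀ j : Fin t, A ≤ j → j ≤ B → V.ctr j ∈ p) ∧
      (∀ x ∈ p, x = V.src l ∨ x = V.snk m ∨ ∃ j : Fin t, A ≤ j ∧ j ≤ B ∧ x = V.ctr j) ∧
      (∀ j k : Fin t, A ≤ j → k ≤ B → (k : ℕ) = (j : ℕ) + 1 →
        ∃ i, D.mem j i ∧ D.mem k i) := by
  obtain ⟨hne, hch, hhd, hlast⟩ := h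
  cases p with
  | nil => exact absurd rfl hne
  | cons a q =>
    have ha : a = V.src l := by simpa using hhd
    cases q with
    | nil =>
      rw [ha] at hlast
      simp at hlast
    | cons b q' =>
      replace hch := List.isChain_cons_cons.mp hch
      obtain ⟨hedge, hch'⟩ := hch
      rw [List.getLast?_cons_cons] at hlast
      cases hedge with
      | ctrSnk i k h1 h2 => exact absurd ha (by simp)
      | ctrCtr i k k' h1 h2 h3 h4 => exact absurd ha (by simp)
      | srcSnk i h1 =>
        have hil : i = l := by simpa using ha
        rw [hil] at h1
        cases q' with
        | cons c q'' => exact absurd (List.isChain_cons_cons.mp hch').1 snk_no_out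
        | nil =>
          have him : l = m := by rw [← hil]; simpa using hlast
          refine Or.inl ⟨him, h1, ?_⟩
          intro x hx
          rcases List.mem_cons.mp hx with h' | h'
          · exact Or.inl (by rw [h', hil])
          · exact Or.inr (by rw [(by simpa using h' : x = V.snk i), hil, him])
      | srcCtr i k h1 h2 =>
        have hil : i = l := by simpa using ha
        rw [hil] at h1 h2
        obtain ⟨B, hAB, hBm, hBmax, hcont, hsub, hint⟩ :=
          ctr_path_struct hdesc (V.ctr k :: q') k m ⟨List.cons_ne_nil _ _, hch', rfl, hlast⟩
        refine Or.inr ⟨k, B, hAB, h1, h2, hBm, hBmax, ?_, ?_, hint⟩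
        · intro j hj1 hj2
          exact List.mem_cons_of_mem _ (hcont j hj1 hj2)
        · intro x hx
          rcases List.mem_cons.mp hx with h' | h'
          · exact Or.inl (by rw [h', hil])
          · rcases hsub x h' with h'' | h''
            · exact Or.inr (Or.inl h'')
            · exact Or.inr (Or.inr h'')

lemma build_ctr_path {m : Fin n} {B : Fin t}
    (hBm : D.mem B m) (hBmax : ∀ k, B < k → ¬ D.mem k m) :
    ∀ (N : ℕ) (A : Fin t), A ≤ B → (B : ℕ) - (A : ℕ) = N →
      (∀ j k : Fin t, A ≤ j → k ≤ B → (k : ℕ) = (j : ℕ) + 1 →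
        ∃ i, D.mem j i ∧ D.mem k i) →
      ∃ q, PathIn (Edge D) q (V.ctr A) (V.snk m) := by
  intro N
  induction N with
  | zero =>
    intro A hAB h0 _
    have hA : A = B := by omega
    subst hA
    exact ⟨[V.ctr A, V.snk m], List.cons_ne_nil _ _,
      List.isChain_cons_cons.mpr ⟨Edge.ctrSnk m A hBm hBmax, List.isChain_singleton _⟩, rfl, rfl⟩
  | succ N ihN =>
    intro A hAB hN hint
    have hlt : (A : ℕ) < (B : ℕ) := by omega
    have hA't : (A : ℕ) + 1 < t := lt_of_le_of_lt hlt B.isLt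
    obtain ⟨i, hi1, hi2⟩ := hint A ⟨(A : ℕ) + 1, hA't⟩ (le_refl _) (by simp only [Fin.le_def, Fin.lt_def, Fin.val_mk]; omega) rfl
    have hedge : Edge D (V.ctr A) (V.ctr ⟨(A : ℕ) + 1, hA't⟩) := by
      refine Edge.ctrCtr i A ⟨(A : ℕ) + 1, hA't⟩ (by simp only [Fin.le_def, Fin.lt_def, Fin.val_mk]; omega) hi1 hi2 ?_
      intro m' hm1 hm2
      exfalso
      simp only [Fin.lt_def, Fin.val_mk] at hm1 hm2
      omega
    obtain ⟨q, hq⟩ := ihN ⟨(A : ℕ) + 1, hA't⟩ (by simp only [Fin.le_def, Fin.lt_def, Fin.val_mk]; omega) (by simp only [Fin.val_mk]; omega)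
      (fun j k hj hk hs => hint j k (le_trans (by simp only [Fin.le_def, Fin.lt_def, Fin.val_mk]; omega) hj) hk hs)
    exact ⟨V.ctr A :: q, path_cons hq hedge⟩

lemma min_unique {A A' : Fin t} {i : Fin n} (h1 : D.mem A i)
    (h1m : ∀ k, k < A → ¬ D.mem k i) (h2 : D.mem A' i)
    (h2m : ∀ k, k < A' → ¬ D.mem k i) : A = A' := by
  rcases lt_trichotomy A A' with h | h | h
  · exact absurd h1 (h2m A h)
  · exact h
  · exact absurd h2 (h1m A' h)

lemma max_unique {B B' : Fin t} {i : Fin n} (h1 : D.mem B i)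
    (h1m : ∀ k, B < k → ¬ D.mem k i) (h2 : D.mem B' i)
    (h2m : ∀ k, B' < k → ¬ D.mem k i) : B = B' := by
  rcases lt_trichotomy B B' with h | h | h
  · exact absurd h2 (h1m B' h)
  · exact h
  · exact absurd h1 (h2m B h)

lemma start_le (hdesc : Descending D) {l1 l2 : Fin n} {A1 A2 : Fin t}
    (h12 : l1 < l2) (h1 : D.mem A1 l1) (h2 : D.mem A2 l2)
    (h2min : ∀ k, k < A2 → ¬ D.mem k l2) : A2 ≤ A1 := by
  by_contra h
  push_neg at h
  exact h2min A1 h ⟨le_trans h1.1 (le_of_lt h12),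
    le_trans h2.2 (le_of_lt (d_lt_of_desc hdesc h))⟩

end Aux


/-- Lemma on intersections in descending star networks. -/
theorem statement1 (n t : ℕ) (D : IntervalData n t) (hdesc : Descending D)
    (l1 l2 m1 m2 : Fin n) (h12 : l1 < l2) (p1 p2 : List (V n t))
    (hp1 : IsPathFromTo D p1 l1 m1) (hp2 : IsPathFromTo D p2 l2 m2) :
    (∃ x, x ∈ p1 ∧ x ∈ p2) ↔ ∃ p, IsPathFromTo D p l1 m2 := by
  have hne12 : l1 ≠ l2 := ne_of_lt h12
  constructor
  · rintro ⟨x, hx1, hx2⟩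
    rcases path_struct hdesc hp1 with ⟨heq1, hno1, hmem1⟩ |
      ⟨A1, B1, hAB1, hA1, hA1min, hB1, hB1max, hc1, hs1, hi1⟩
    · rcases path_struct hdesc hp2 with ⟨heq2, hno2, hmem2⟩ |
        ⟨A2, B2, hAB2, hA2, hA2min, hB2, hB2max, hc2, hs2, hi2⟩
      · exfalso
        have hx2' := hmem2 x hx2
        rcases hmem1 x hx1 with h1 | h1 <;> rw [h1] at hx2' <;>
          rcases hx2' with h2 | h2
        · exact hne12 (by simpa using h2)
        · exact absurd h2 (by simp)
        · exact absurd h2 (by simp)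
        · exact hne12 (by rw [heq1, heq2]; simpa using h2)
      · exfalso
        have hx2' := hs2 x hx2
        rcases hmem1 x hx1 with h1 | h1 <;> rw [h1] at hx2' <;>
          rcases hx2' with h2 | h2 | ⟨j, hj1, hj2, h2⟩
        · exact hne12 (by simpa using h2)
        · exact absurd h2 (by simp)
        · exact absurd h2 (by simp)
        · exact absurd h2 (by simp)
        · have hmm : m1 = m2 := by simpa using h2
          exact hno1 B2 (by rw [heq1, hmm]; exact hB2)
        · exact absurd h2 (by simp)
    · rcases path_struct hdesc hp2 with ⟨heq2, hno2, hmem2⟩ |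
        ⟨A2, B2, hAB2, hA2, hA2min, hB2, hB2max, hc2, hs2, hi2⟩
      · exfalso
        have hx1' := hs1 x hx1
        rcases hmem2 x hx2 with h2 | h2 <;> rw [h2] at hx1' <;>
          rcases hx1' with h1 | h1 | ⟨j, hj1, hj2, h1⟩
        · exact hne12 ((by simpa using h1 : l2 = l1).symm)
        · exact absurd h1 (by simp)
        · exact absurd h1 (by simp)
        · exact absurd h1 (by simp)
        · have hmm : m2 = m1 := by simpa using h1
          exact hno2 B1 (by rw [heq2, hmm]; exact hB1)
        · exact absurd h1 (by simp)
      · obtain ⟨k, hk1, hk2, hk3, hk4⟩ :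
          ∃ k : Fin t, A1 ≤ k ∧ k ≤ B1 ∧ A2 ≤ k ∧ k ≤ B2 := by
          have hx2' := hs2 x hx2
          rcases hs1 x hx1 with h1 | h1 | ⟨j, hj1, hj2, h1⟩ <;> rw [h1] at hx2' <;>
            rcases hx2' with h2 | h2 | ⟨j', hj1', hj2', h2⟩
          · exact absurd (by simpa using h2 : l1 = l2) hne12
          · exact absurd h2 (by simp)
          · exact absurd h2 (by simp)
          · exact absurd h2 (by simp)
          · have hmm : m1 = m2 := by simpa using h2
            have hBB : B1 = B2 :=
              max_unique hB1 hB1max (by rw [hmm]; exact hB2)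
                (by rw [hmm]; exact hB2max)
            exact ⟨B1, hAB1, le_refl _, by rw [hBB]; exact hAB2, le_of_eq hBB⟩
          · exact absurd h2 (by simp)
          · exact absurd h2 (by simp)
          · exact absurd h2 (by simp)
          · have hjj : j = j' := by simpa using h2
            exact ⟨j, hj1, hj2, by rw [hjj]; exact hj1', by rw [hjj]; exact hj2'⟩
        have hA1B2 : A1 ≤ B2 := le_trans hk1 hk4
        have hint : ∀ j k' : Fin t, A1 ≤ j → k' ≤ B2 → (k' : ℕ) = (j : ℕ) + 1 →
            ∃ i, D.mem j i ∧ D.mem k' i := by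
          intro j k' hj hk' hs
          by_cases hcase : (j : ℕ) < (k : ℕ)
          · refine hi1 j k' hj ?_ hs
            rw [Fin.le_def]
            rw [Fin.le_def] at hk2
            omega
          · refine hi2 j k' ?_ hk' hs
            rw [Fin.le_def]
            rw [Fin.le_def] at hk3
            omega
        obtain ⟨q, hq⟩ := build_ctr_path hB2 hB2max ((B2 : ℕ) - (A1 : ℕ)) A1
          hA1B2 rfl hint
        exact ⟨V.src l1 :: q, path_cons hq (Edge.srcCtr l1 A1 hA1 hA1min)⟩
  · rintro ⟨r, hr⟩
    rcases path_struct hdesc hr with ⟨heq, hno, _⟩ |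
      ⟨A', B', hAB', hA', hA'min, hB', hB'max, _, _, _⟩
    · exfalso
      rcases path_struct hdesc hp2 with ⟨heq2, hno2, _⟩ |
        ⟨A2, B2, _, _, _, hB2, _, _, _, _⟩
      · exact hne12 (heq.trans heq2.symm)
      · exact hno B2 (by rw [heq]; exact hB2)
    · rcases path_struct hdesc hp1 with ⟨heq1, hno1, _⟩ |
        ⟨A1, B1, hAB1, hA1, hA1min, hB1, hB1max, hc1, _, _⟩
      · exact absurd hA' (hno1 A')
      · rcases path_struct hdesc hp2 with ⟨heq2, hno2, _⟩ |
          ⟨A2, B2, hAB2, hA2, hA2min, hB2, hB2max, hc2, _, _⟩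
        · exact absurd (show D.mem B' l2 by rw [heq2]; exact hB') (hno2 B')
        · have hA1A' : A1 = A' := min_unique hA1 hA1min hA' hA'min
          have hB2B' : B2 = B' := max_unique hB2 hB2max hB' hB'max
          have hA2A1 : A2 ≤ A1 := start_le hdesc h12 hA1 hA2 hA2min
          refine ⟨V.ctr A1, hc1 A1 (le_refl _) hAB1, hc2 A1 hA2A1 ?_⟩
          rw [hA1A', hB2B']
          exact hAB'

end

end ZigZag
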